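/- For a real number k and integers s ≥ 0 and j ≥ 1 with 2j − s − 1 ≥ 0, define d(k,s,j) = ((−1)^s / ((2s−1)!! · (2j−1)!)) · (∏_{r=1}^{s} (j−r)(2k+2r−1)) · (∏_{r=1}^{2j−s−1} (k−j+s+r)), where (2s−1)!! = ∏_{i=1}^{s}(2i−1) (with empty products equal to 1 and (−1)!! = 1). Then for every real k and all integers s ≥ 1 and j with 2j ≥ s + 2, the following identity holds: d(k,s,j) + ((2k+1)·k / (2(4s²−1))) · d(k+1, s−1, j−1) = d(k, s+1, j). -/
import Mathlib


/-- The quantity `d(k, s, j) = ((−1)^s / ((2s−1)!! · (2j−1)!)) ·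
∏_{r=1}^{s} (j−r)(2k+2r−1) · ∏_{r=1}^{2j−s−1} (k−j+s+r)`, where
`(2s−1)!! = ∏_{i=1}^{s}(2i−1)` with `(−1)!! = 1` and empty products equal to `1`. -/
noncomputable def dcoef (k : ℝ) (s j : ℕ) : ℝ :=
  ((-1 : ℝ) ^ s / ((∏ i ∈ Finset.range s, ((2 * i + 1 : ℕ) : ℝ))
      * ((2 * j - 1).factorial : ℝ)))
    * (∏ r ∈ Finset.range s, (((j : ℝ) - ((r : ℝ) + 1)) * (2 * k + 2 * ((r : ℝ) + 1) - 1)))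
    * (∏ r ∈ Finset.range (2 * j - s - 1), (k - (j : ℝ) + (s : ℝ) + ((r : ℝ) + 1)))

/-- (Recursive identity for the coefficients `d(k, s, j)`.)  For every
real `k` and integers `s ≥ 1`, `2j ≥ s + 2`:
`d(k,s,j) + ((2k+1)k / (2(4s²−1))) · d(k+1, s−1, j−1) = d(k, s+1, j)`. -/
theorem stmt_13 (k : ℝ) (s j : ℕ) (hs : 1 ≤ s) (hj : s + 2 ≤ 2 * j) :
    dcoef k s j + ((2 * k + 1) * k / (2 * (4 * (s : ℝ) ^ 2 - 1))) * dcoef (k + 1) (s - 1) (j - 1)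
      = dcoef k (s + 1) j := by
  obtain ⟨t, rfl⟩ : ∃ t, s = t + 1 := ⟨s - 1, by omega⟩
  obtain ⟨m, rfl⟩ : ∃ m, j = m + 2 := ⟨j - 2, by omega⟩
  obtain ⟨N, hN⟩ : ∃ N, 2 * m + 1 = t + N := ⟨2 * m + 1 - t, by omega⟩
  have h1 : 2 * (m + 2) - (t + 1) - 1 = N + 1 := by omega
  have h2 : 2 * (m + 2) - (t + 1 + 1) - 1 = N := by omega
  have h3 : t + 1 - 1 = t := by omega
  have h4 : m + 2 - 1 = m + 1 := by omega
  have h5 : 2 * (m + 1) - t - 1 = N := by omega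
  have h6 : 2 * (m + 2) - 1 = 2 * m + 3 := by omega
  have h7 : 2 * (m + 1) - 1 = 2 * m + 1 := by omega
  unfold dcoef
  simp only [h1, h2, h3, h4, h5, h6, h7]
  set A : ℝ := ∏ i ∈ Finset.range t, ((2 * i + 1 : ℕ) : ℝ) with hA
  set F : ℝ := ((2 * m + 1).factorial : ℝ) with hF
  set P : ℝ := ∏ r ∈ Finset.range t, (((m : ℝ) - r) * (2 * k + 2 * r + 3)) with hP
  set Q : ℝ := ∏ r ∈ Finset.range N, (k - (m : ℝ) + t + r + 1) with hQ
  have hApos : (0 : ℝ) < A := Finset.prod_pos fun i _ => by positivity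
  have hFpos : (0 : ℝ) < F := by rw [hF]; exact_mod_cast Nat.factorial_pos _
  -- double factorial pieces
  have eA1 : (∏ i ∈ Finset.range (t + 1), ((2 * i + 1 : ℕ) : ℝ)) = A * (2 * t + 1) := by
    rw [Finset.prod_range_succ, ← hA]; push_cast; ring
  have eA2 : (∏ i ∈ Finset.range (t + 1 + 1), ((2 * i + 1 : ℕ) : ℝ))
      = A * (2 * t + 1) * (2 * t + 3) := by
    rw [Finset.prod_range_succ, eA1]; push_cast; ring
  -- factorial pieces
  have eF : ((2 * m + 3).factorial : ℝ) = (2 * (m : ℝ) + 3) * (2 * m + 2) * F := by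
    have : (2 * m + 3).factorial = (2 * m + 3) * ((2 * m + 2) * (2 * m + 1).factorial) := by
      rw [show 2 * m + 3 = (2 * m + 2) + 1 from rfl, Nat.factorial_succ,
        show 2 * m + 2 = (2 * m + 1) + 1 from rfl, Nat.factorial_succ]
    rw [this]; push_cast; ring
  -- P pieces
  have eP1 : (∏ r ∈ Finset.range (t + 1),
        ((((m : ℕ) + 2 : ℕ) : ℝ) - ((r : ℝ) + 1)) * (2 * k + 2 * ((r : ℝ) + 1) - 1))
      = P * (((m : ℝ) + 1) * (2 * k + 1)) := by
    rw [Finset.prod_range_succ']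
    congr 1
    · exact Finset.prod_congr rfl fun r _ => by push_cast; ring
    · push_cast; ring
  have eP2 : (∏ r ∈ Finset.range (t + 1 + 1),
        ((((m : ℕ) + 2 : ℕ) : ℝ) - ((r : ℝ) + 1)) * (2 * k + 2 * ((r : ℝ) + 1) - 1))
      = P * (((m : ℝ) + 1) * (2 * k + 1)) * ((((m : ℝ) - t) * (2 * k + 2 * t + 3))) := by
    rw [Finset.prod_range_succ, eP1]; push_cast; ring
  have ePmid : (∏ r ∈ Finset.range t,
        ((((m : ℕ) + 1 : ℕ) : ℝ) - ((r : ℝ) + 1)) * (2 * (k + 1) + 2 * ((r : ℝ) + 1) - 1))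
      = P := Finset.prod_congr rfl fun r _ => by push_cast; ring
  -- Q pieces
  have eQ1 : (∏ r ∈ Finset.range (N + 1),
        (k - (((m : ℕ) + 2 : ℕ) : ℝ) + (((t : ℕ) + 1 : ℕ) : ℝ) + ((r : ℝ) + 1)))
      = Q * (k - (m : ℝ) + t) := by
    rw [Finset.prod_range_succ']
    congr 1
    · exact Finset.prod_congr rfl fun r _ => by push_cast; ring
    · push_cast; ring
  have eQ2 : (∏ r ∈ Finset.range N,
        (k - (((m : ℕ) + 2 : ℕ) : ℝ) + (((t : ℕ) + 1 + 1 : ℕ) : ℝ) + ((r : ℝ) + 1)))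
      = Q := Finset.prod_congr rfl fun r _ => by push_cast; ring
  have eQmid : (∏ r ∈ Finset.range N,
        (k + 1 - (((m : ℕ) + 1 : ℕ) : ℝ) + (((t : ℕ)) : ℝ) + ((r : ℝ) + 1)))
      = Q := Finset.prod_congr rfl fun r _ => by push_cast; ring
  rw [eA1, eA2, eF, eP1, eP2, ePmid, eQ1, eQ2, eQmid]
  have hne1 : (2 * (t : ℝ) + 1) ≠ 0 := by positivity
  have hne2 : (2 * (t : ℝ) + 3) ≠ 0 := by positivity
  have hne3 : (2 * (m : ℝ) + 3) ≠ 0 := by positivity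
  have hne4 : (2 * (m : ℝ) + 2) ≠ 0 := by positivity
  have hne5 : (4 * ((t : ℝ) + 1) ^ 2 - 1) ≠ 0 := by
    have : (4 * ((t : ℝ) + 1) ^ 2 - 1) = (2 * t + 1) * (2 * t + 3) := by ring
    rw [this]; positivity
  push_cast
  field_simp
  ring
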